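/- For all positive integers n and l, the number of non-isomorphic super edge-magic labelings of K_{1,n} ∪ lK_1 is exactly (l + 1)(l + 2); precisely, the number of pairs (c, S), where c ∈ {1, ..., n + l + 1} and S ⊆ {1, ..., n + l + 1}, for which some super edge-magic labeling f of K_{1,n} ∪ lK_1 satisfies f(x) = c and f({y_1, ..., y_n}) = S, equals (l + 1)(l + 2). -/

import Mathlib

/-- `f` is an edge-magic labeling of the graph `G` with valence `k`:
`f` is a bijection from `V(G) ∪ E(G)` onto `{1, …, p + q}` and
`f u + f v + f uv = k` for every edge `uv`. -/
def IsEdgeMagic {V : Type*} [Fintype V] (G : SimpleGraph V)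
    (f : V ⊕ G.edgeSet → ℕ) (k : ℕ) : Prop :=
  Set.BijOn f Set.univ (Set.Icc 1 (Fintype.card V + G.edgeSet.ncard)) ∧
  ∀ u v, ∀ h : G.Adj u v,
    f (Sum.inl u) + f (Sum.inl v) + f (Sum.inr ⟨s(u, v), G.mem_edgeSet.mpr h⟩) = k

/-- `f` is a super edge-magic labeling of `G` with valence `k`: an edge-magic
labeling whose vertex labels are exactly `{1, …, p}`. -/
def IsSuperEdgeMagic {V : Type*} [Fintype V] (G : SimpleGraph V)
    (f : V ⊕ G.edgeSet → ℕ) (k : ℕ) : Prop :=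
  IsEdgeMagic G f k ∧ ∀ v, f (Sum.inl v) ∈ Set.Icc 1 (Fintype.card V)

/-- The graph `K_{1,n} ∪ lK_1`: the disjoint union of the star `K_{1,n}`
(with center `0` and leaves `1, …, n`) and `l` isolated vertices
(`n+1, …, n+l`), on `n + l + 1` vertices. -/
def starUnion (n l : ℕ) : SimpleGraph (Fin (n + l + 1)) where
  Adj u v := (u = 0 ∧ v ≠ 0 ∧ (v : ℕ) ≤ n) ∨ (v = 0 ∧ u ≠ 0 ∧ (u : ℕ) ≤ n)
  symm := ⟨fun u v h => h.symm⟩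
  loopless := ⟨fun v h => by rcases h with ⟨h1, h2, _⟩ | ⟨h1, h2, _⟩ <;> exact h2 h1⟩

lemma mem_edgeSet_star (n l : ℕ) (e : Sym2 (Fin (n + l + 1))) :
    e ∈ (starUnion n l).edgeSet ↔
      ∃ v : Fin (n + l + 1), v ≠ 0 ∧ (v : ℕ) ≤ n ∧ e = s(0, v) := by
  induction e using Sym2.inductionOn with
  | hf u v =>
    constructor
    · rintro (⟨h1, h2, h3⟩ | ⟨h1, h2, h3⟩) <;> dsimp only at *
      · exact ⟨v, h2, h3, by rw [h1]⟩
      · exact ⟨u, h2, h3, by rw [h1, Sym2.eq_swap]⟩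
    · rintro ⟨w, hw0, hwn, hw⟩
      rw [Sym2.eq_iff] at hw
      rcases hw with ⟨rfl, rfl⟩ | ⟨rfl, rfl⟩
      · exact Or.inl ⟨rfl, hw0, hwn⟩
      · exact Or.inr ⟨rfl, hw0, hwn⟩

lemma edgeSet_star_eq (n l : ℕ) :
    (starUnion n l).edgeSet =
      (fun w : Fin (n + l + 1) => s((0 : Fin (n+l+1)), w)) ''
        {w | w ≠ 0 ∧ (w : ℕ) ≤ n} := by
  ext e
  rw [mem_edgeSet_star]
  simp only [Set.mem_image, Set.mem_setOf_eq]
  constructor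
  · rintro ⟨w, h1, h2, h3⟩; exact ⟨w, ⟨h1, h2⟩, h3.symm⟩
  · rintro ⟨w, ⟨h1, h2⟩, h3⟩; exact ⟨w, h1, h2, h3.symm⟩

lemma ncard_leafSet (n l : ℕ) : {w : Fin (n+l+1) | w ≠ 0 ∧ (w : ℕ) ≤ n}.ncard = n := by
  have himg : (Fin.val '' {w : Fin (n+l+1) | w ≠ 0 ∧ (w : ℕ) ≤ n}) = Set.Icc 1 n := by
    ext m
    simp only [Set.mem_image, Set.mem_setOf_eq, Set.mem_Icc]
    constructor
    · rintro ⟨w, ⟨h1, h2⟩, rfl⟩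
      exact ⟨Nat.one_le_iff_ne_zero.2 (fun h => h1 (Fin.ext h)), h2⟩
    · rintro ⟨h1, h2⟩
      refine ⟨⟨m, by omega⟩, ⟨?_, ?_⟩, rfl⟩
      · intro h
        have := congrArg Fin.val h
        simp at this
        omega
      · simpa using h2
  have := Set.ncard_image_of_injective {w : Fin (n+l+1) | w ≠ 0 ∧ (w : ℕ) ≤ n} Fin.val_injective
  rw [himg, ← Finset.coe_Icc, Set.ncard_coe_finset, Nat.card_Icc] at this
  omega

lemma starUnion_inj (n l : ℕ) : Set.InjOn (fun w : Fin (n + l + 1) => s((0 : Fin (n+l+1)), w))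
    {w | w ≠ 0 ∧ (w : ℕ) ≤ n} := by
  intro a ha b hb h
  simp only at h
  rcases Sym2.eq_iff.1 h with ⟨_, h⟩ | ⟨h1, h2⟩
  · exact h
  · rw [h2, ← h1]

lemma ncard_edgeSet_star (n l : ℕ) : (starUnion n l).edgeSet.ncard = n := by
  rw [edgeSet_star_eq, Set.ncard_image_of_injOn (starUnion_inj n l), ncard_leafSet]

/-- vertex labeling: value at "vertex index" t. -/
def gAux (n a c : ℕ) (t : ℕ) : ℕ :=
  if t = 0 then c
  else if t ≤ n then a + t - 1
  else if (if t - n < (if c < a then c else c - n) then t - n else t - n + 1) < a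
       then (if t - n < (if c < a then c else c - n) then t - n else t - n + 1)
       else (if t - n < (if c < a then c else c - n) then t - n else t - n + 1) + n


section
variable {n l a c : ℕ} (hn : 1 ≤ n) (hl : 1 ≤ l) (ha1 : 1 ≤ a) (ha2 : a + n ≤ n + l + 2)
  (hc1 : 1 ≤ c) (hc2 : c ≤ n + l + 1) (hcS : c < a ∨ a + n ≤ c)

include hn hl ha1 ha2 hc1 hc2 hcS

set_option linter.unusedSectionVars false

lemma gAux_mem' : ∀ t ≤ n + l, 1 ≤ gAux n a c t ∧ gAux n a c t ≤ n + l + 1 := by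
  intro t ht
  rcases hcS with h | h <;> unfold gAux <;> split_ifs <;> omega

lemma gAux_inj' : ∀ t₁ ≤ n + l, ∀ t₂ ≤ n + l,
    gAux n a c t₁ = gAux n a c t₂ → t₁ = t₂ := by
  intro t₁ h₁ t₂ h₂
  rcases hcS with h | h <;> unfold gAux <;> split_ifs <;> omega
end

lemma gAux_zero (n a c : ℕ) : gAux n a c 0 = c := by simp [gAux]

lemma gAux_leaf {n a c t : ℕ} (h1 : 1 ≤ t) (h2 : t ≤ n) : gAux n a c t = a + t - 1 := by
  unfold gAux
  split_ifs <;> omega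

/-- The constructed labeling. -/
noncomputable def fCon (n l a c : ℕ) : Fin (n+l+1) ⊕ (starUnion n l).edgeSet → ℕ :=
  Sum.elim (fun v => gAux n a c v.val)
    (fun e => (c + (a + n - 1) + (n + l + 2)) -
      Sym2.lift ⟨fun u v : Fin (n+l+1) => gAux n a c u.val + gAux n a c v.val,
        fun _ _ => add_comm _ _⟩ e.val)

lemma backward (n l : ℕ) (hn : 1 ≤ n) (hl : 1 ≤ l) (a c : ℕ) (ha1 : 1 ≤ a)
    (ha2 : a + n ≤ n + l + 2) (hc1 : 1 ≤ c) (hc2 : c ≤ n + l + 1)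
    (hcS : c < a ∨ a + n ≤ c) :
    ∃ f k, IsSuperEdgeMagic (starUnion n l) f k ∧ f (Sum.inl 0) = c ∧
      {m | ∃ v : Fin (n+l+1), v ≠ 0 ∧ (v : ℕ) ≤ n ∧ f (Sum.inl v) = m}
        = Set.Icc a (a+n-1) := by
  set p := n + l + 1 with hp
  set k := c + (a + n - 1) + (n + l + 2) with hk
  set f := fCon n l a c with hf
  have hmem := gAux_mem' hn hl ha1 ha2 hc1 hc2 hcS
  have hinj := gAux_inj' hn hl ha1 ha2 hc1 hc2 hcS
  have hvlt : ∀ v : Fin p, (v : ℕ) ≤ n + l := fun v => by omega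
  have hzero : ((0 : Fin p) : ℕ) = 0 := rfl
  -- value of f on an edge
  have hfe : ∀ e : (starUnion n l).edgeSet, ∀ w : Fin p, w ≠ 0 → (w : ℕ) ≤ n →
      (e : Sym2 (Fin p)) = s(0, w) → f (Sum.inr e) = n + p + 1 - (w : ℕ) := by
    intro e w hw0 hwn he
    have hw1 : 1 ≤ (w : ℕ) := by
      rcases Nat.eq_zero_or_pos (w : ℕ) with h | h
      · exact absurd (Fin.ext h) hw0
      · exact h
    show k - _ = _
    rw [he, Sym2.lift_mk]
    simp only [hzero, gAux_zero, gAux_leaf hw1 hwn]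
    omega
  have hfe_mem : ∀ e : (starUnion n l).edgeSet,
      p + 1 ≤ f (Sum.inr e) ∧ f (Sum.inr e) ≤ p + n := by
    intro e
    obtain ⟨w, hw0, hwn, he⟩ := (mem_edgeSet_star n l e).1 e.2
    rw [hfe e w hw0 hwn he]
    have hw1 : 1 ≤ (w : ℕ) := by
      rcases Nat.eq_zero_or_pos (w : ℕ) with h | h
      · exact absurd (Fin.ext h) hw0
      · exact h
    omega
  -- f is injective
  have hfinj : Function.Injective f := by
    intro x y hxy
    match x, y with
    | Sum.inl v, Sum.inl w =>
      exact congrArg Sum.inl (Fin.ext (hinj _ (hvlt v) _ (hvlt w) hxy))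
    | Sum.inl v, Sum.inr e =>
      exact absurd hxy (by
        have h1 := hmem v (hvlt v); have h2 := hfe_mem e
        have h3 : f (Sum.inl v) = gAux n a c v.val := rfl
        rw [h3]; omega)
    | Sum.inr e, Sum.inl v =>
      exact absurd hxy (by
        have h1 := hmem v (hvlt v); have h2 := hfe_mem e
        have h3 : f (Sum.inl v) = gAux n a c v.val := rfl
        rw [h3]; omega)
    | Sum.inr e₁, Sum.inr e₂ =>
      obtain ⟨w₁, hw₁0, hw₁n, he₁⟩ := (mem_edgeSet_star n l e₁).1 e₁.2
      obtain ⟨w₂, hw₂0, hw₂n, he₂⟩ := (mem_edgeSet_star n l e₂).1 e₂.2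
      rw [hfe e₁ w₁ hw₁0 hw₁n he₁, hfe e₂ w₂ hw₂0 hw₂n he₂] at hxy
      have hw1 : 1 ≤ (w₁ : ℕ) := by
        rcases Nat.eq_zero_or_pos (w₁ : ℕ) with h | h
        · exact absurd (Fin.ext h) hw₁0
        · exact h
      have hw2 : 1 ≤ (w₂ : ℕ) := by
        rcases Nat.eq_zero_or_pos (w₂ : ℕ) with h | h
        · exact absurd (Fin.ext h) hw₂0
        · exact h
      have : w₁ = w₂ := Fin.ext (by omega)
      subst this
      congr 1
      exact Subtype.ext (by rw [he₁, he₂])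
  -- image of f equals Icc 1 (p + n)
  have himg : f '' Set.univ = Set.Icc 1 (p + n) := by
    apply Set.eq_of_subset_of_ncard_le
    · rintro m ⟨x, -, rfl⟩
      cases x with
      | inl v =>
        have h1 := hmem v (hvlt v)
        have h3 : f (Sum.inl v) = gAux n a c v.val := rfl
        rw [h3]; exact ⟨h1.1, by omega⟩
      | inr e => have := hfe_mem e; exact ⟨by omega, this.2⟩
    · have h1 : (Set.Icc 1 (p + n)).ncard = p + n := by
        rw [← Finset.coe_Icc, Set.ncard_coe_finset, Nat.card_Icc]; omega
      have h2 : (f '' Set.univ).ncard = p + n := by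
        rw [Set.ncard_image_of_injective _ hfinj, Set.ncard_univ, Nat.card_sum]
        rw [Nat.card_coe_set_eq, ncard_edgeSet_star]
        simp [hp]
      omega
    · exact Set.finite_Icc _ _
  refine ⟨f, k, ⟨⟨?_, ?_⟩, ?_⟩, ?_, ?_⟩
  · -- BijOn
    rw [Fintype.card_fin, ncard_edgeSet_star]
    exact ⟨fun x _ => himg ▸ Set.mem_image_of_mem f (Set.mem_univ x),
      fun x _ y _ h => hfinj h, by rw [← himg]; exact Set.surjOn_image f Set.univ⟩
  · -- magic sum
    intro u v hadj
    have key : ∀ u v : Fin p, (starUnion n l).Adj u v →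
        gAux n a c u.val + gAux n a c v.val ≤ k := by
      intro u v h
      rcases h with ⟨h1, h2, h3⟩ | ⟨h1, h2, h3⟩
      · have hw1 : 1 ≤ (v : ℕ) := by
          rcases Nat.eq_zero_or_pos (v : ℕ) with h | h
          · exact absurd (Fin.ext h) h2
          · exact h
        rw [h1]
        simp only [hzero, gAux_zero, gAux_leaf hw1 h3]
        omega
      · have hw1 : 1 ≤ (u : ℕ) := by
          rcases Nat.eq_zero_or_pos (u : ℕ) with h | h
          · exact absurd (Fin.ext h) h2
          · exact h
        rw [h1]
        simp only [hzero, gAux_zero, gAux_leaf hw1 h3]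
        omega
    show gAux n a c u.val + gAux n a c v.val + (k - _) = k
    rw [Sym2.lift_mk]
    simp only
    have := key u v hadj
    omega
  · -- super
    intro v
    rw [Fintype.card_fin]
    exact hmem v (hvlt v)
  · exact gAux_zero n a c
  · ext m
    simp only [Set.mem_setOf_eq, Set.mem_Icc]
    constructor
    · rintro ⟨v, hv0, hvn, rfl⟩
      have hv1 : 1 ≤ (v : ℕ) := by
        rcases Nat.eq_zero_or_pos (v : ℕ) with h | h
        · exact absurd (Fin.ext h) hv0
        · exact h
      show a ≤ gAux n a c v.val ∧ gAux n a c v.val ≤ a + n - 1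
      rw [gAux_leaf hv1 hvn]
      omega
    · rintro ⟨h1, h2⟩
      refine ⟨⟨m - a + 1, by omega⟩, ?_, ?_, ?_⟩
      · intro h
        have := congrArg Fin.val h
        simp only [hzero] at this
        omega
      · simp only [Fin.val_mk]; omega
      · show gAux n a c ((⟨m - a + 1, by omega⟩ : Fin p) : ℕ) = m
        simp only [Fin.val_mk]
        rw [gAux_leaf (by omega) (by omega)]
        omega

lemma forward (n l : ℕ) (hn : 1 ≤ n) (f : Fin (n+l+1) ⊕ (starUnion n l).edgeSet → ℕ)
    (k : ℕ) (hf : IsSuperEdgeMagic (starUnion n l) f k) :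
    ∃ a, 1 ≤ a ∧ a + n ≤ n + l + 2 ∧
      {m | ∃ v : Fin (n+l+1), v ≠ 0 ∧ (v : ℕ) ≤ n ∧ f (Sum.inl v) = m}
        = Set.Icc a (a+n-1) ∧
      f (Sum.inl 0) ∉ Set.Icc a (a+n-1) ∧ f (Sum.inl 0) ∈ Set.Icc 1 (n+l+1) := by
  set p := n + l + 1 with hp
  set c := f (Sum.inl 0) with hc
  have hb := hf.1.1
  rw [Fintype.card_fin, ncard_edgeSet_star] at hb
  have hsup : ∀ v, f (Sum.inl v) ∈ Set.Icc 1 p := by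
    intro v; have := hf.2 v; rwa [Fintype.card_fin] at this
  have hinj : ∀ x y, f x = f y → x = y := fun x y h =>
    hb.injOn (Set.mem_univ x) (Set.mem_univ y) h
  -- vertex labels fill Icc 1 p
  have hvimg : Set.range (fun v : Fin p => f (Sum.inl v)) = Set.Icc 1 p := by
    apply Set.eq_of_subset_of_ncard_le
    · rintro m ⟨v, rfl⟩; exact hsup v
    · have h1 : (Set.Icc 1 p).ncard = p := by
        rw [← Finset.coe_Icc, Set.ncard_coe_finset, Nat.card_Icc]; omega
      have h2 : (Set.range (fun v : Fin p => f (Sum.inl v))).ncard = p := by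
        have hginj : Function.Injective (fun v : Fin p => f (Sum.inl v)) :=
          fun x y h => Sum.inl_injective (hinj _ _ h)
        rw [← Set.image_univ, Set.ncard_image_of_injective _ hginj, Set.ncard_univ]
        simp [hp]
      omega
    · exact (Set.finite_Icc 1 p)
  -- edge labels are in Icc (p+1) (p+n)
  have hedge : ∀ e : (starUnion n l).edgeSet, f (Sum.inr e) ∈ Set.Icc (p+1) (p+n) := by
    intro e
    have h1 : f (Sum.inr e) ∈ Set.Icc 1 (p + n) := hb.mapsTo (Set.mem_univ _)
    simp only [Set.mem_Icc] at h1 ⊢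
    refine ⟨?_, h1.2⟩
    by_contra hle
    have : f (Sum.inr e) ∈ Set.Icc 1 p := ⟨h1.1, by omega⟩
    rw [← hvimg] at this
    obtain ⟨v, hv⟩ := this
    exact absurd (hinj _ _ hv) (by simp)
  -- every value in Icc (p+1) (p+n) is an edge label
  have hesurj : ∀ t ∈ Set.Icc (p+1) (p+n), ∃ e : (starUnion n l).edgeSet,
      f (Sum.inr e) = t := by
    intro t ht
    simp only [Set.mem_Icc] at ht
    have : t ∈ Set.Icc 1 (p + n) := ⟨by omega, ht.2⟩
    obtain ⟨x, -, hx⟩ := hb.surjOn this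
    cases x with
    | inl v => exfalso; have := hsup v; rw [hx] at this; simp only [Set.mem_Icc] at this; omega
    | inr e => exact ⟨e, hx⟩
  -- magic equation for each leaf
  have hmagic : ∀ w : Fin p, w ≠ 0 → (w : ℕ) ≤ n →
      ∀ e : (starUnion n l).edgeSet, (e : Sym2 (Fin p)) = s(0, w) →
      c + f (Sum.inl w) + f (Sum.inr e) = k := by
    intro w hw0 hwn e he
    have hadj : (starUnion n l).Adj 0 w := Or.inl ⟨rfl, hw0, hwn⟩
    have := hf.1.2 0 w hadj
    have heq : (⟨s(0,w), (starUnion n l).mem_edgeSet.mpr hadj⟩ : (starUnion n l).edgeSet) = e :=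
      Subtype.ext he.symm
    rwa [heq] at this
  -- decompose an edge
  have hdecomp : ∀ e : (starUnion n l).edgeSet, ∃ w : Fin p, w ≠ 0 ∧ (w:ℕ) ≤ n ∧
      (e : Sym2 (Fin p)) = s(0, w) := fun e => (mem_edgeSet_star n l e).1 e.2
  -- find a : leaf whose edge has label p + n
  obtain ⟨e₁, he₁⟩ := hesurj (p + n) ⟨by omega, le_refl _⟩
  obtain ⟨w₁, hw₁0, hw₁n, hw₁e⟩ := hdecomp e₁
  set a := f (Sum.inl w₁) with ha
  have hk : c + a + (p + n) = k := by
    have := hmagic w₁ hw₁0 hw₁n e₁ hw₁e; omega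
  have ha1 : 1 ≤ a ∧ a ≤ p := by have := hsup w₁; simpa using this
  -- leaf with edge label p+1 gives the upper bound
  obtain ⟨e₂, he₂⟩ := hesurj (p + 1) ⟨le_refl _, by omega⟩
  obtain ⟨w₂, hw₂0, hw₂n, hw₂e⟩ := hdecomp e₂
  have hm₂ := hmagic w₂ hw₂0 hw₂n e₂ hw₂e
  have hw₂v : f (Sum.inl w₂) = a + n - 1 := by omega
  have hub : a + n ≤ n + l + 2 := by
    have := hsup w₂; simp only [Set.mem_Icc] at this; omega
  refine ⟨a, ha1.1, hub, ?_, ?_, hsup 0⟩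
  · ext m
    simp only [Set.mem_setOf_eq, Set.mem_Icc]
    constructor
    · rintro ⟨v, hv0, hvn, rfl⟩
      obtain ⟨e, he⟩ : ∃ e : (starUnion n l).edgeSet, (e : Sym2 (Fin p)) = s(0, v) :=
        ⟨⟨s(0,v), (starUnion n l).mem_edgeSet.mpr (Or.inl ⟨rfl, hv0, hvn⟩)⟩, rfl⟩
      have h1 := hmagic v hv0 hvn e he
      have h2 := hedge e
      simp only [Set.mem_Icc] at h2
      omega
    · rintro ⟨hma, hmb⟩
      obtain ⟨e, he⟩ := hesurj (a + p + n - m) ⟨by omega, by omega⟩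
      obtain ⟨w, hw0, hwn, hwe⟩ := hdecomp e
      have h1 := hmagic w hw0 hwn e hwe
      exact ⟨w, hw0, hwn, by omega⟩
  · simp only [Set.mem_Icc]
    intro ⟨h1, h2⟩
    -- c is in the leaf-label interval: derive contradiction via injectivity
    obtain ⟨e, he⟩ := hesurj (a + p + n - c) ⟨by omega, by omega⟩
    obtain ⟨w, hw0, hwn, hwe⟩ := hdecomp e
    have hm := hmagic w hw0 hwn e hwe
    have : f (Sum.inl w) = c := by omega
    have := hinj _ _ this
    rw [Sum.inl.injEq] at this
    exact hw0 this

/-- For all positive integers `n` and `l`, the number of non-isomorphic super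
edge-magic labelings of `K_{1,n} ∪ lK_1` is exactly `(l + 1)(l + 2)`:
the number of pairs `(c, S)` with `c ∈ {1, …, n+l+1}` and
`S ⊆ {1, …, n+l+1}` for which some super edge-magic labeling `f` satisfies
`f x = c` (on the center `x`) and `f({y_1, …, y_n}) = S` (on the leaves)
equals `(l + 1)(l + 2)`. -/

theorem stmt_10 (n l : ℕ) (hn : 1 ≤ n) (hl : 1 ≤ l) :
    {pr : ℕ × Set ℕ | pr.1 ∈ Set.Icc 1 (n + l + 1) ∧ pr.2 ⊆ Set.Icc 1 (n + l + 1) ∧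
      ∃ f k, IsSuperEdgeMagic (starUnion n l) f k ∧ f (Sum.inl 0) = pr.1 ∧
        pr.2 = {m | ∃ v : Fin (n + l + 1), v ≠ 0 ∧ (v : ℕ) ≤ n ∧
          f (Sum.inl v) = m}}.ncard = (l + 1) * (l + 2) := by
  classical
  set F : Finset (ℕ × Set ℕ) := (Finset.Icc 1 (l+2)).biUnion (fun a =>
    ((Finset.Icc 1 (n+l+1)) \ Finset.Icc a (a+n-1)).image
      (fun c => (c, Set.Icc a (a+n-1)))) with hF
  have hmemF : ∀ pr : ℕ × Set ℕ, pr ∈ F ↔ ∃ a, (1 ≤ a ∧ a ≤ l + 2) ∧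
      ∃ c, ((1 ≤ c ∧ c ≤ n+l+1) ∧ ¬(a ≤ c ∧ c ≤ a+n-1)) ∧
        (c, Set.Icc a (a+n-1)) = pr := by
    intro pr
    simp [hF, Finset.mem_biUnion, Finset.mem_image, Finset.mem_sdiff, Finset.mem_Icc]
  have hset : {pr : ℕ × Set ℕ | pr.1 ∈ Set.Icc 1 (n + l + 1) ∧ pr.2 ⊆ Set.Icc 1 (n + l + 1) ∧
      ∃ f k, IsSuperEdgeMagic (starUnion n l) f k ∧ f (Sum.inl 0) = pr.1 ∧
        pr.2 = {m | ∃ v : Fin (n + l + 1), v ≠ 0 ∧ (v : ℕ) ≤ n ∧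
          f (Sum.inl v) = m}} = ↑F := by
    ext pr
    simp only [Set.mem_setOf_eq, Finset.coe_sort_coe, Finset.mem_coe, hmemF]
    constructor
    · rintro ⟨hp1, hp2, f, k, hf, hfc, hfS⟩
      obtain ⟨a, ha1, ha2, hS, hcn, hcm⟩ := forward n l hn f k hf
      refine ⟨a, ⟨ha1, by omega⟩, pr.1, ⟨?_, ?_⟩, ?_⟩
      · rw [hfc] at hcm; simpa [Set.mem_Icc] using hcm
      · rw [hfc] at hcn; simpa [Set.mem_Icc] using hcn
      · rw [← hS, ← hfS]
    · rintro ⟨a, ⟨ha1, ha2⟩, c, ⟨⟨hc1, hc2⟩, hcS⟩, rfl⟩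
      obtain ⟨f, k, hf, hfc, hfS⟩ := backward n l hn hl a c ha1 (by omega) hc1 hc2 (by omega)
      refine ⟨by simp [Set.mem_Icc]; omega, ?_, f, k, hf, hfc, hfS.symm⟩
      intro m hm
      simp only [Set.mem_Icc] at hm ⊢
      omega
  rw [hset, Set.ncard_coe_finset, hF]
  rw [Finset.card_biUnion]
  · have hone : ∀ a ∈ Finset.Icc 1 (l+2),
        (((Finset.Icc 1 (n+l+1)) \ Finset.Icc a (a+n-1)).image
          (fun c => (c, Set.Icc a (a+n-1)))).card = l + 1 := by
      intro a ha
      simp only [Finset.mem_Icc] at ha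
      rw [Finset.card_image_of_injective _ (fun c₁ c₂ h => (Prod.mk.injEq _ _ _ _ ▸ h).1)]
      rw [Finset.card_sdiff_of_subset (by
        intro x hx
        simp only [Finset.mem_Icc] at hx ⊢
        omega)]
      rw [Nat.card_Icc, Nat.card_Icc]
      omega
    rw [Finset.sum_congr rfl hone, Finset.sum_const, Nat.card_Icc, smul_eq_mul]
    have h22 : l + 2 + 1 - 1 = l + 2 := by omega
    rw [h22, Nat.mul_comm]
  · -- pairwise disjointness
    intro a₁ h₁ a₂ h₂ hne
    simp only [Finset.disjoint_left]
    intro pr hpr₁ hpr₂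
    simp only [Finset.mem_image, Finset.mem_sdiff, Finset.mem_Icc] at hpr₁ hpr₂
    obtain ⟨c₁, -, he₁⟩ := hpr₁
    obtain ⟨c₂, -, he₂⟩ := hpr₂
    have : Set.Icc a₁ (a₁+n-1) = Set.Icc a₂ (a₂+n-1) := by
      have := congrArg Prod.snd he₁
      have := congrArg Prod.snd he₂
      simp_all
    apply hne
    have h1 : a₁ ∈ Set.Icc a₂ (a₂+n-1) := this ▸ Set.mem_Icc.2 ⟨le_refl _, by omega⟩
    have h2 : a₂ ∈ Set.Icc a₁ (a₁+n-1) := this.symm ▸ Set.mem_Icc.2 ⟨le_refl _, by omega⟩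
    simp only [Set.mem_Icc] at h1 h2
    omega
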